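/- arXiv:1308.0182 — 3 statements merged into one kernel-verified Lean document; each statement's English description precedes it below -/
import Mathlib

section
/- Let A and B be real 2×2 matrices such that Bᵀ A = Aᵀ B, and suppose that the only vector ξ ∈ ℝ² with A ξ = 0 and B ξ = 0 is ξ = 0. Then for every real ε > 0, the complex 2×2 matrix A − i ε B (entries a_{jk} − i ε b_{jk}) has nonzero determinant. -/
open Matrix

private lemma dp_self_nonneg (v : Fin 2 → ℝ) : 0 ≤ v ⬝ᵥ v :=
  Finset.sum_nonneg fun i _ => mul_self_nonneg (v i)

/-- Lemma 2(ii): if `Bᵀ A = Aᵀ B` (the Lagrangian property) and the stacked matrix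
`(A; B)` has trivial kernel, then `det(A − iεB) ≠ 0` for every `ε > 0`. -/
theorem det_sub_smul_I_ne_zero
    (A B : Matrix (Fin 2) (Fin 2) ℝ)
    (hsym : Bᵀ * A = Aᵀ * B)
    (hker : ∀ ξ : Fin 2 → ℝ, A.mulVec ξ = 0 → B.mulVec ξ = 0 → ξ = 0)
    (ε : ℝ) (hε : 0 < ε) :
    (Matrix.of fun i j => (A i j : ℂ) - (ε : ℂ) * Complex.I * (B i j : ℂ)).det ≠ 0 := by
  intro hdet
  obtain ⟨v, hv, hMv⟩ := Matrix.exists_mulVec_eq_zero_iff.mpr hdet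
  set x : Fin 2 → ℝ := fun j => (v j).re with hxdef
  set y : Fin 2 → ℝ := fun j => (v j).im with hydef
  have hAx : A.mulVec x = (-ε) • B.mulVec y := by
    funext i
    have h := congrArg Complex.re (congrFun hMv i)
    simp [Matrix.mulVec, dotProduct, Fin.sum_univ_two, Complex.add_re,
      Complex.mul_re, Complex.sub_re, Complex.sub_im, Complex.mul_im] at h
    simp [Matrix.mulVec, dotProduct, Fin.sum_univ_two, hxdef, hydef]
    fin_cases i <;> simp at h ⊢ <;> linarith
  have hAy : A.mulVec y = ε • B.mulVec x := by
    funext i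
    have h := congrArg Complex.im (congrFun hMv i)
    simp [Matrix.mulVec, dotProduct, Fin.sum_univ_two, Complex.add_im,
      Complex.mul_re, Complex.sub_re, Complex.sub_im, Complex.mul_im] at h
    simp [Matrix.mulVec, dotProduct, Fin.sum_univ_two, hxdef, hydef]
    fin_cases i <;> simp at h ⊢ <;> linarith
  have key : (B.mulVec x) ⬝ᵥ (A.mulVec y) = (B.mulVec y) ⬝ᵥ (A.mulVec x) := by
    have h1 : (B.mulVec x) ⬝ᵥ (A.mulVec y) = x ⬝ᵥ ((Bᵀ * A).mulVec y) := by
      rw [← Matrix.mulVec_mulVec, Matrix.dotProduct_mulVec x, Matrix.vecMul_transpose]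
    have h2 : (B.mulVec y) ⬝ᵥ (A.mulVec x) = x ⬝ᵥ ((Aᵀ * B).mulVec y) := by
      rw [← Matrix.mulVec_mulVec, Matrix.dotProduct_mulVec x, Matrix.vecMul_transpose,
        dotProduct_comm]
    rw [h1, h2, hsym]
  rw [hAy, hAx] at key
  rw [dotProduct_smul, dotProduct_smul] at key
  simp only [smul_eq_mul, neg_mul, neg_smul] at key
  have hBx0 : B.mulVec x = 0 := by
    rw [← dotProduct_self_eq_zero (v := B.mulVec x)]
    nlinarith [dp_self_nonneg (B.mulVec x),
      dp_self_nonneg (B.mulVec y)]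
  have hBy0 : B.mulVec y = 0 := by
    rw [← dotProduct_self_eq_zero (v := B.mulVec y)]
    nlinarith [dp_self_nonneg (B.mulVec x),
      dp_self_nonneg (B.mulVec y)]
  have hAx0 : A.mulVec x = 0 := by rw [hAx, hBy0, smul_zero]
  have hAy0 : A.mulVec y = 0 := by rw [hAy, hBx0, smul_zero]
  have hx0 := hker x hAx0 hBx0
  have hy0 := hker y hAy0 hBy0
  apply hv
  funext j
  have hxj : (v j).re = 0 := congrFun hx0 j
  have hyj : (v j).im = 0 := congrFun hy0 j
  exact Complex.ext hxj hyj
end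

section
/- Let P, Pτ, Pψ, Xτ, Xψ ∈ ℝ² satisfy ⟨P, Xτ⟩ = 1, ⟨P, Xψ⟩ = 0, P₂ = 0, and det(P, Pψ) = P₁(Pψ)₂ − P₂(Pψ)₁ ≠ 0. Then (Xτ)₁ (Pψ)₂ − (Xψ)₁ (Pτ)₂ ≠ 0. -/
open scoped RealInnerProductSpace

/-- Appendix 1 lemma: at a point of the Lagrangian manifold with eikonal
coordinates where `P₂ = 0` and `det(P, Pψ) ≠ 0`, the mixed Jacobian
`𝒥ₛ = (Xτ)₁(Pψ)₂ − (Xψ)₁(Pτ)₂` is nonzero. -/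
theorem mixed_jacobian_ne_zero
    (P Pτ Pψ Xτ Xψ : EuclideanSpace ℝ (Fin 2))
    (h1 : ⟪P, Xτ⟫ = 1) (h2 : ⟪P, Xψ⟫ = 0) (hP2 : P 1 = 0)
    (hdet : P 0 * Pψ 1 - P 1 * Pψ 0 ≠ 0) :
    Xτ 0 * Pψ 1 - Xψ 0 * Pτ 1 ≠ 0 := by
  rw [PiLp.inner_apply, Fin.sum_univ_two] at h1 h2
  simp only [RCLike.inner_apply, conj_trivial] at h1 h2
  rw [hP2] at h1 h2 hdet
  have hP0 : P 0 ≠ 0 := fun h => hdet (by rw [h]; ring)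
  have hXψ : Xψ 0 = 0 := by
    have := h2; rw [mul_zero, add_zero] at this; exact (mul_eq_zero.mp this).resolve_right hP0
  have hXτ : Xτ 0 ≠ 0 := fun h => by simp [h] at h1
  have hPψ : Pψ 1 ≠ 0 := fun h => hdet (by rw [h]; ring)
  rw [hXψ]
  simpa using mul_ne_zero hXτ hPψ
end

section
/- Let n : ℝ → ℝ be continuously differentiable with n(r) > 0 for all r, let T(r) = ∫₀^r n(s) ds, let I ⊆ ℝ be an open interval, and let ρ : I → ℝ be differentiable with ρ(τ) > 0 and T(ρ(τ)) = τ for all τ ∈ I. Define X(τ, ψ) = ρ(τ) n(ψ) and P(τ, ψ) = n(ρ(τ)) n(ψ), where n(ψ) = (cos ψ, sin ψ). Then for all τ ∈ I and ψ ∈ ℝ: ∂X/∂τ(τ,ψ) = P(τ,ψ) / (‖P(τ,ψ)‖ · n(‖X(τ,ψ)‖)) and ∂P/∂τ(τ,ψ) = ‖P(τ,ψ)‖ · n′(‖X(τ,ψ)‖) · X(τ,ψ) / (n(‖X(τ,ψ)‖)² · ‖X(τ,ψ)‖). -/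
open Real
open scoped RealInnerProductSpace

/-- The unit vector `n(ψ) = (cos ψ, sin ψ)` in `ℝ²`. -/
noncomputable def unitVec (ψ : ℝ) : EuclideanSpace ℝ (Fin 2) :=
  (WithLp.equiv 2 (Fin 2 → ℝ)).symm ![Real.cos ψ, Real.sin ψ]

lemma norm_unitVec (ψ : ℝ) : ‖unitVec ψ‖ = 1 := by
  rw [show (1:ℝ) = Real.sqrt 1 by simp]
  rw [unitVec, EuclideanSpace.norm_eq]
  congr 1
  simp [Fin.sum_univ_two, sq_abs]

/-- In the axisymmetric example, `X(τ,ψ) = ρ(τ) n(ψ)`, `P(τ,ψ) = n(ρ(τ)) n(ψ)`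
(with `ρ` the inverse of `T(r) = ∫₀^r n`) solves the Hamiltonian system for
`H(x,p) = ‖p‖ / n(‖x‖)`: `X_τ = P/(‖P‖ n(‖X‖))` and
`P_τ = ‖P‖ n′(‖X‖) X / (n(‖X‖)² ‖X‖)`. -/
theorem axisymmetric_hamiltonian_system
    (n : ℝ → ℝ) (hn : ContDiff ℝ 1 n) (hnpos : ∀ r, 0 < n r)
    (T : ℝ → ℝ) (hT : ∀ r, T r = ∫ s in (0:ℝ)..r, n s)
    (I : Set ℝ) (hIopen : IsOpen I) (hIconn : I.OrdConnected)
    (ρ : ℝ → ℝ)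
    (hρdiff : ∀ τ ∈ I, DifferentiableAt ℝ ρ τ)
    (hρpos : ∀ τ ∈ I, 0 < ρ τ)
    (hTρ : ∀ τ ∈ I, T (ρ τ) = τ)
    (X P : ℝ → ℝ → EuclideanSpace ℝ (Fin 2))
    (hX : ∀ τ ψ, X τ ψ = ρ τ • unitVec ψ)
    (hP : ∀ τ ψ, P τ ψ = n (ρ τ) • unitVec ψ) :
    ∀ τ ∈ I, ∀ ψ : ℝ,
      deriv (fun t => X t ψ) τ = (1 / (‖P τ ψ‖ * n ‖X τ ψ‖)) • P τ ψ ∧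
      deriv (fun t => P t ψ) τ =
        ((‖P τ ψ‖ * deriv n ‖X τ ψ‖) / ((n ‖X τ ψ‖) ^ 2 * ‖X τ ψ‖)) • X τ ψ := by
  intro τ hτ ψ
  have hncont : Continuous n := hn.continuous
  -- T has derivative n r at every r
  have hT' : ∀ r : ℝ, HasDerivAt T (n r) r := by
    intro r
    have : HasDerivAt (fun u => ∫ s in (0:ℝ)..u, n s) (n r) r :=
      intervalIntegral.integral_hasDerivAt_right (hncont.intervalIntegrable 0 r)
        (hncont.stronglyMeasurableAtFilter _ _) hncont.continuousAt
    exact this.congr_of_eventuallyEq (Filter.Eventually.of_forall fun x => hT x)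
  have hnρpos := hnpos (ρ τ)
  have hnρne : n (ρ τ) ≠ 0 := hnρpos.ne'
  have hρτpos := hρpos τ hτ
  -- derivative of ρ
  have hρd := hρdiff τ hτ
  have hcomp : HasDerivAt (fun t => T (ρ t)) (n (ρ τ) * deriv ρ τ) τ :=
    (hT' (ρ τ)).comp τ hρd.hasDerivAt
  have hid : HasDerivAt (fun t => T (ρ t)) 1 τ := by
    have : (fun t => T (ρ t)) =ᶠ[nhds τ] (fun t => t) :=
      Filter.eventuallyEq_of_mem (hIopen.mem_nhds hτ) hTρ
    exact (hasDerivAt_id τ).congr_of_eventuallyEq this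
  have hderivρ : deriv ρ τ = 1 / n (ρ τ) := by
    have h1 : n (ρ τ) * deriv ρ τ = 1 := hcomp.unique hid
    field_simp
    linarith [h1]
  -- norms
  have hXn : ‖X τ ψ‖ = ρ τ := by
    rw [hX, norm_smul, norm_unitVec, Real.norm_eq_abs, abs_of_pos hρτpos, mul_one]
  have hPn : ‖P τ ψ‖ = n (ρ τ) := by
    rw [hP, norm_smul, norm_unitVec, Real.norm_eq_abs, abs_of_pos hnρpos, mul_one]
  have hρX : HasDerivAt (fun t => X t ψ) ((1 / n (ρ τ)) • unitVec ψ) τ := by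
    have : HasDerivAt (fun t => ρ t • unitVec ψ) (deriv ρ τ • unitVec ψ) τ :=
      hρd.hasDerivAt.smul_const _
    rw [hderivρ] at this
    exact this.congr_of_eventuallyEq (Filter.Eventually.of_forall fun t => hX t ψ)
  have hndiff : DifferentiableAt ℝ n (ρ τ) := (hn.differentiable one_ne_zero) (ρ τ)
  have hρP : HasDerivAt (fun t => P t ψ)
      ((deriv n (ρ τ) * (1 / n (ρ τ))) • unitVec ψ) τ := by
    have hnρ : HasDerivAt (fun t => n (ρ t)) (deriv n (ρ τ) * deriv ρ τ) τ :=
      hndiff.hasDerivAt.comp τ hρd.hasDerivAt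
    rw [hderivρ] at hnρ
    exact (hnρ.smul_const (unitVec ψ)).congr_of_eventuallyEq
      (Filter.Eventually.of_forall fun t => hP t ψ)
  constructor
  · rw [hρX.deriv, hXn, hPn, hP τ ψ, smul_smul]
    congr 1
    field_simp
  · rw [hρP.deriv, hXn, hPn, hX τ ψ, smul_smul]
    congr 1
    field_simp
end
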